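/- A column coadmissibility criterion: a column C over [±n] with doubled-letter set I = {z_1 > ... > z_r} is coadmissible if and only if there exist unbarred letters H = {h_1 > ... > h_r} ⊆ [n] such that h_r is the smallest letter > z_r with h_r ∉ C and -h_r ∉ C, and for i = r-1,...,1, h_i is the smallest letter > max(h_{i+1}, z_i) with h_i ∉ C and -h_i ∉ C. -/

import Mathlib

/-- The alphabet `[±n] = {1 < 2 < ⋯ < n < n̄ < ⋯ < 1̄}` is encoded as `{1, …, 2n} ⊆ ℕ`
with the usual order, the barred letter `ī` being encoded as `2n+1-i`. -/
def bar (n x : ℕ) : ℕ := 2 * n + 1 - x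

/-- A column over `[±n]`: a strictly increasing list with entries in `{1, …, 2n}`. -/
def IsColumn (n : ℕ) (C : List ℕ) : Prop :=
  C.Chain' (· < ·) ∧ ∀ x ∈ C, 1 ≤ x ∧ x ≤ 2 * n

/-- The one column condition (1CC): for every unbarred `i` with both `i` and `ī` in `C`,
the number of entries `x` with `x ≤ i` or `x ≥ ī` is at most `i`. -/
def OCC (n : ℕ) (C : List ℕ) : Prop :=
  ∀ i, 1 ≤ i → i ≤ n → i ∈ C → bar n i ∈ C →
    C.countP (fun x => decide (x ≤ i ∨ bar n i ≤ x)) ≤ i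

/-- A column is coadmissible if for every pair `i, ī` in `C`, the number `N*(i)` of
entries `x` with `i ≤ x ≤ ī` satisfies `N*(i) ≤ n - i + 1`. -/
def CoAdm (n : ℕ) (C : List ℕ) : Prop :=
  ∀ i, 1 ≤ i → i ≤ n → i ∈ C → bar n i ∈ C →
    C.countP (fun x => decide (i ≤ x ∧ x ≤ bar n i)) ≤ n - i + 1

/-- The set `I` of doubled unbarred letters of `C`, in increasing order `z_r < ⋯ < z₁`. -/
def IlistAsc (n : ℕ) (C : List ℕ) : List ℕ :=
  (List.range (n + 1)).filter (fun z => decide (1 ≤ z ∧ z ∈ C ∧ bar n z ∈ C))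

/-- The smallest unbarred letter `h > bound` with `h ∉ C` and `h̄ ∉ C`, if any. -/
def pickAbove (n : ℕ) (C : List ℕ) (bound : ℕ) : Option ℕ :=
  ((List.range (n + 1)).filter (fun t => decide (bound < t ∧ t ∉ C ∧ bar n t ∉ C))).min?

/-- The greedy construction of the set `H = {h₁ > ⋯ > h_r}` of the coadmissibility
criterion: `h_r` is the smallest letter `> z_r` with `h_r, h̄_r ∉ C`, and `hᵢ` is the
smallest letter `> max (hᵢ₊₁, zᵢ)` with `hᵢ, h̄ᵢ ∉ C`; the doubled letters are processed
in increasing order; returns `none` if at some stage no such letter exists. -/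
def coSplitH (n : ℕ) (C : List ℕ) : List ℕ → ℕ → Option (List ℕ)
  | [], _ => some []
  | z :: zs, bound =>
    match pickAbove n C (max bound z) with
    | none => none
    | some h => (coSplitH n C zs h).map (h :: ·)

/-- The set `H` of the coadmissibility criterion exists. -/
def HasCoSplit (n : ℕ) (C : List ℕ) : Prop :=
  (coSplitH n C (IlistAsc n C) 0).isSome = true

namespace CoadmAux

/-- The candidate list for `pickAbove`. -/
def candL (n : ℕ) (C : List ℕ) (m : ℕ) : List ℕ :=
  (List.range (n + 1)).filter (fun t => decide (m < t ∧ t ∉ C ∧ bar n t ∉ C))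

/-- The number of free letters in `(m, n]`. -/
def fc (n : ℕ) (C : List ℕ) (m : ℕ) : ℕ := (candL n C m).length

lemma mem_candL {n m t : ℕ} {C : List ℕ} :
    t ∈ candL n C m ↔ t ≤ n ∧ m < t ∧ t ∉ C ∧ bar n t ∉ C := by
  simp [candL, List.mem_filter, List.mem_range, Nat.lt_succ_iff]

lemma pickAbove_eq (n : ℕ) (C : List ℕ) (m : ℕ) :
    pickAbove n C m = (candL n C m).min? := rfl

lemma min?_nat {l : List ℕ} {a : ℕ} : l.min? = some a ↔ a ∈ l ∧ ∀ b ∈ l, a ≤ b :=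
  List.min?_eq_some_iff

lemma fc_antitone (n : ℕ) (C : List ℕ) {m m' : ℕ} (h : m ≤ m') :
    fc n C m' ≤ fc n C m := by
  unfold fc candL
  rw [← List.countP_eq_length_filter, ← List.countP_eq_length_filter]
  apply List.countP_mono_left
  intro a _ ha
  simp only [decide_eq_true_eq] at ha ⊢
  exact ⟨lt_of_le_of_lt h ha.1, ha.2⟩

/-- general counting helper -/
lemma countP_eq_succ {l : List ℕ} (hl : l.Nodup) {p q : ℕ → Bool} {h : ℕ}
    (hmem : h ∈ l) (hph : p h = true) (hqh : q h = false)
    (hqp : ∀ t ∈ l, q t = true → p t = true)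
    (hpq : ∀ t ∈ l, p t = true → t = h ∨ q t = true) :
    l.countP p = l.countP q + 1 := by
  induction l with
  | nil => simp at hmem
  | cons a l ih =>
    rcases List.mem_cons.mp hmem with rfl | hal
    · have heq : l.countP p = l.countP q := by
        apply List.countP_congr
        intro x hx
        constructor
        · intro hpx
          rcases hpq x (List.mem_cons_of_mem _ hx) hpx with rfl | hqx
          · exact absurd hx (List.nodup_cons.mp hl).1
          · exact hqx
        · exact fun hqx => hqp x (List.mem_cons_of_mem _ hx) hqx
      rw [List.countP_cons, List.countP_cons, hph, hqh, heq]
      simp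
    · have hane : a ≠ h := by rintro rfl; exact (List.nodup_cons.mp hl).1 hal
      have hpa : p a = q a := by
        by_cases hp : p a = true
        · rcases hpq a (List.mem_cons_self) hp with rfl | hq
          · exact absurd rfl hane
          · rw [hp, hq]
        · by_cases hq : q a = true
          · exact absurd (hqp a (List.mem_cons_self) hq) hp
          · simp only [Bool.not_eq_true] at hp hq
            rw [hp, hq]
      rw [List.countP_cons, List.countP_cons, hpa,
        ih (List.nodup_cons.mp hl).2 hal (fun t ht => hqp t (List.mem_cons_of_mem _ ht))
          (fun t ht => hpq t (List.mem_cons_of_mem _ ht))]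
      omega

lemma fc_pick {n m h : ℕ} {C : List ℕ} (hp : pickAbove n C m = some h) :
    fc n C m = fc n C h + 1 := by
  rw [pickAbove_eq, min?_nat] at hp
  obtain ⟨hmem, hmin⟩ := hp
  obtain ⟨hhn, hmh, hfree⟩ := mem_candL.mp hmem
  unfold fc candL
  rw [← List.countP_eq_length_filter, ← List.countP_eq_length_filter]
  have hmemr : h ∈ List.range (n + 1) := List.mem_range.mpr (by omega)
  apply countP_eq_succ (List.nodup_range) hmemr
  · simp only [decide_eq_true_eq]; exact ⟨hmh, hfree⟩
  · simp only [decide_eq_false_iff_not]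
    rintro ⟨hcon, -⟩
    exact lt_irrefl h hcon
  · intro t _ ht
    simp only [decide_eq_true_eq] at ht ⊢
    exact ⟨lt_trans hmh ht.1, ht.2⟩
  · intro t htr ht
    have htn : t < n + 1 := List.mem_range.mp htr
    simp only [decide_eq_true_eq] at ht
    have hmem' : t ∈ candL n C m := mem_candL.mpr ⟨by omega, ht.1, ht.2⟩
    have hle := hmin t hmem'
    rcases Nat.eq_or_lt_of_le hle with heq | hlt
    · exact Or.inl heq.symm
    · right
      simp only [decide_eq_true_eq]
      exact ⟨hlt, ht.2⟩

lemma pick_mem {n m h : ℕ} {C : List ℕ} (hp : pickAbove n C m = some h) :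
    h ≤ n ∧ m < h ∧ h ∉ C ∧ bar n h ∉ C := by
  rw [pickAbove_eq, min?_nat] at hp
  exact mem_candL.mp hp.1

lemma coSplit_len (n : ℕ) (C : List ℕ) :
    ∀ (zs : List ℕ) (b : ℕ) (H : List ℕ), coSplitH n C zs b = some H →
      zs.length ≤ fc n C b := by
  intro zs
  induction zs with
  | nil => intro b H _; simp
  | cons z rest ih =>
    intro b H hsp
    rw [coSplitH] at hsp
    rcases hpick : pickAbove n C (max b z) with _ | h
    · rw [hpick] at hsp; simp at hsp
    · rw [hpick] at hsp
      simp only [Option.map_eq_some_iff] at hsp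
      obtain ⟨H', hH', _⟩ := hsp
      have h1 := ih h H' hH'
      have h2 : fc n C (max b z) = fc n C h + 1 := fc_pick hpick
      have h3 : fc n C (max b z) ≤ fc n C b := fc_antitone n C (le_max_left _ _)
      simp only [List.length_cons]
      omega

lemma coSplit_perz (n : ℕ) (C : List ℕ) :
    ∀ (zs : List ℕ), zs.Pairwise (· < ·) → ∀ (b : ℕ) (H : List ℕ),
      coSplitH n C zs b = some H →
      ∀ z ∈ zs, ((zs.filter (fun w => decide (z ≤ w))).length ≤ fc n C z) := by
  intro zs
  induction zs with
  | nil => intro _ b H _ z hz; simp at hz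
  | cons z0 rest ih =>
    intro hpw b H hsp z hz
    rw [coSplitH] at hsp
    rcases hpick : pickAbove n C (max b z0) with _ | h
    · rw [hpick] at hsp; simp at hsp
    · rw [hpick] at hsp
      simp only [Option.map_eq_some_iff] at hsp
      obtain ⟨H', hH', _⟩ := hsp
      have hlt : ∀ w ∈ rest, z0 < w := fun w hw => (List.pairwise_cons.mp hpw).1 w hw
      rcases List.mem_cons.mp hz with rfl | hzr
      · -- z = z0 : filter keeps everything
        have hall : (z :: rest).filter (fun w => decide (z ≤ w)) = z :: rest := by
          apply List.filter_eq_self.mpr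
          intro a ha
          simp only [decide_eq_true_eq]
          rcases List.mem_cons.mp ha with rfl | har
          · exact le_refl _
          · exact le_of_lt (hlt a har)
        rw [hall]
        have h1 := coSplit_len n C rest h H' hH'
        have hm := pick_mem hpick
        -- fc z0 ≥ fc h + 1 : h is a candidate above z0 too
        have h2 := fc_pick hpick
        have h3 : fc n C (max b z) ≤ fc n C z := fc_antitone n C (le_max_right _ _)
        simp only [List.length_cons]
        omega
      · have hz0z : z0 < z := hlt z hzr
        have : (z0 :: rest).filter (fun w => decide (z ≤ w))
            = rest.filter (fun w => decide (z ≤ w)) := by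
          rw [List.filter_cons]
          simp only [decide_eq_true_eq]
          rw [if_neg (by omega)]
        rw [this]
        exact ih (List.pairwise_cons.mp hpw).2 h H' hH' z hzr

lemma coSplit_back (n : ℕ) (C : List ℕ) :
    ∀ (zs : List ℕ), zs.Pairwise (· < ·) → ∀ (b : ℕ),
      (∀ z ∈ zs, ((zs.filter (fun w => decide (z ≤ w))).length ≤ fc n C (max b z))) →
      (coSplitH n C zs b).isSome = true := by
  intro zs
  induction zs with
  | nil => intro _ b _; rw [coSplitH]; rfl
  | cons z0 rest ih =>
    intro hpw b hyp
    have hlt : ∀ w ∈ rest, z0 < w := fun w hw => (List.pairwise_cons.mp hpw).1 w hw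
    have hall : (z0 :: rest).filter (fun w => decide (z0 ≤ w)) = z0 :: rest := by
      apply List.filter_eq_self.mpr
      intro a ha
      simp only [decide_eq_true_eq]
      rcases List.mem_cons.mp ha with rfl | har
      · exact le_refl _
      · exact le_of_lt (hlt a har)
    have h0 := hyp z0 (List.mem_cons_self)
    rw [hall] at h0
    simp only [List.length_cons] at h0
    -- candidate list for max b z0 is nonempty
    have hfcz : 1 ≤ fc n C (max b z0) := by
      have := fc_antitone n C (le_max_right b z0)
      omega
    have hne : candL n C (max b z0) ≠ [] := by
      intro hcon
      rw [fc, hcon] at hfcz; simp at hfcz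
    rcases hpick : pickAbove n C (max b z0) with _ | h
    · rw [pickAbove_eq] at hpick
      exact absurd (List.min?_eq_none_iff.mp hpick) hne
    · have hm := pick_mem hpick
      have hfceq : fc n C (max b z0) = fc n C h + 1 := fc_pick hpick
      have hrest : (coSplitH n C rest h).isSome = true := by
        apply ih (List.pairwise_cons.mp hpw).2 h
        intro w hw
        have hz0w : z0 < w := hlt w hw
        have heqf : (z0 :: rest).filter (fun v => decide (w ≤ v))
            = rest.filter (fun v => decide (w ≤ v)) := by
          rw [List.filter_cons]
          simp only [decide_eq_true_eq]
          rw [if_neg (by omega)]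
        rcases le_or_gt h w with hhw | hwh
        · have := hyp w (List.mem_cons_of_mem _ hw)
          rw [heqf] at this
          have h1 : fc n C (max b w) ≤ fc n C w := fc_antitone n C (le_max_right _ _)
          have h2 : fc n C w = fc n C (max h w) := by rw [max_eq_right hhw]
          omega
        · have h1 : (rest.filter (fun v => decide (w ≤ v))).length ≤ rest.length :=
            List.length_filter_le _ _
          have h2 : fc n C (max h w) = fc n C h := by rw [max_eq_left (le_of_lt hwh)]
          omega
      obtain ⟨H', hH'⟩ := Option.isSome_iff_exists.mp hrest
      rw [coSplitH, hpick]
      show ((coSplitH n C rest h).map (h :: ·)).isSome = true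
      rw [hH']
      rfl

lemma lf_range (k : ℕ) (p : ℕ → Prop) [DecidablePred p] :
    ((List.range k).filter (fun t => decide (p t))).length = ((Finset.range k).filter p).card := rfl

lemma keyFinset (n : ℕ) (S : Finset ℕ) (hS : ∀ x ∈ S, 1 ≤ x ∧ x ≤ 2 * n)
    (i : ℕ) (h1 : 1 ≤ i) (h2 : i ≤ n) :
    (S.filter (fun x => i ≤ x ∧ x ≤ 2 * n + 1 - i)).card
      + ((Finset.Icc i n).filter (fun t => t ∉ S ∧ 2 * n + 1 - t ∉ S)).card
    = (n - i + 1) + ((Finset.Icc i n).filter (fun t => t ∈ S ∧ 2 * n + 1 - t ∈ S)).card := by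
  have hsplit := Finset.card_filter_add_card_filter_not
    (s := S.filter (fun x => i ≤ x ∧ x ≤ 2 * n + 1 - i)) (p := fun x => x ≤ n)
  rw [Finset.filter_filter, Finset.filter_filter] at hsplit
  have hT1 : S.filter (fun x => (i ≤ x ∧ x ≤ 2 * n + 1 - i) ∧ x ≤ n)
      = (Finset.Icc i n).filter (fun t => t ∈ S) := by
    ext x
    simp only [Finset.mem_filter, Finset.mem_Icc]
    constructor
    · rintro ⟨hxS, ⟨hix, _⟩, hxn⟩; exact ⟨⟨hix, hxn⟩, hxS⟩
    · rintro ⟨⟨hix, hxn⟩, hxS⟩; exact ⟨hxS, ⟨hix, by omega⟩, hxn⟩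
  have hT2 : (S.filter (fun x => (i ≤ x ∧ x ≤ 2 * n + 1 - i) ∧ ¬ x ≤ n)).card
      = ((Finset.Icc i n).filter (fun t => 2 * n + 1 - t ∈ S)).card := by
    apply Finset.card_nbij' (fun x => 2 * n + 1 - x) (fun t => 2 * n + 1 - t)
    · intro a ha
      simp only [Finset.mem_coe, Finset.mem_filter, Finset.mem_Icc] at ha ⊢
      obtain ⟨haS, ⟨hia, hab⟩, han⟩ := ha
      have hb := hS a haS
      refine ⟨⟨by omega, by omega⟩, ?_⟩
      have heq : 2 * n + 1 - (2 * n + 1 - a) = a := by omega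
      rw [heq]; exact haS
    · intro t ht
      simp only [Finset.mem_coe, Finset.mem_filter, Finset.mem_Icc] at ht ⊢
      obtain ⟨⟨hit, htn⟩, htS⟩ := ht
      have hb := hS _ htS
      exact ⟨htS, ⟨by omega, by omega⟩, by omega⟩
    · intro a ha
      simp only [Finset.mem_coe, Finset.mem_filter] at ha
      have := hS a ha.1
      beta_reduce
      omega
    · intro t ht
      simp only [Finset.mem_coe, Finset.mem_filter, Finset.mem_Icc] at ht
      beta_reduce
      omega
  rw [← hsplit, hT1, hT2]
  rw [Finset.card_filter (fun t => t ∈ S), Finset.card_filter (fun t => 2 * n + 1 - t ∈ S),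
    Finset.card_filter (fun t => t ∉ S ∧ 2 * n + 1 - t ∉ S),
    Finset.card_filter (fun t => t ∈ S ∧ 2 * n + 1 - t ∈ S)]
  have hone : (n - i + 1) = ∑ _t ∈ Finset.Icc i n, 1 := by
    rw [Finset.sum_const, smul_eq_mul, mul_one, Nat.card_Icc]; omega
  rw [hone, ← Finset.sum_add_distrib, ← Finset.sum_add_distrib, ← Finset.sum_add_distrib]
  apply Finset.sum_congr rfl
  intro t _
  by_cases ht1 : t ∈ S <;> by_cases ht2 : 2 * n + 1 - t ∈ S <;> simp [ht1, ht2]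

lemma fc_eq_card (n z : ℕ) (C : List ℕ) :
    fc n C z = ((Finset.range (n + 1)).filter (fun t => z < t ∧ t ∉ C ∧ bar n t ∉ C)).card :=
  lf_range (n + 1) (fun t => z < t ∧ t ∉ C ∧ bar n t ∉ C)

lemma Ilist_filter_len (n z : ℕ) (C : List ℕ) :
    ((IlistAsc n C).filter (fun w => decide (z ≤ w))).length
      = ((Finset.range (n + 1)).filter (fun t => z ≤ t ∧ 1 ≤ t ∧ t ∈ C ∧ bar n t ∈ C)).card := by
  rw [IlistAsc, List.filter_filter,
    ← lf_range (n + 1) (fun t => z ≤ t ∧ 1 ≤ t ∧ t ∈ C ∧ bar n t ∈ C),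
    ← List.countP_eq_length_filter, ← List.countP_eq_length_filter]
  apply List.countP_congr
  intro x _
  simp only [Bool.and_eq_true, decide_eq_true_eq]

lemma fc_Icc (n z : ℕ) (C : List ℕ) (h1 : 1 ≤ z) (h2 : z ≤ n) (hzC : z ∈ C) :
    fc n C z = ((Finset.Icc z n).filter (fun t => t ∉ C ∧ bar n t ∉ C)).card := by
  rw [fc_eq_card]
  congr 1
  ext t
  simp only [Finset.mem_filter, Finset.mem_range, Finset.mem_Icc]
  constructor
  · rintro ⟨htn, hzt, hf⟩; exact ⟨⟨by omega, by omega⟩, hf⟩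
  · rintro ⟨⟨hzt, htn⟩, hf⟩
    refine ⟨by omega, ?_, hf⟩
    rcases Nat.eq_or_lt_of_le hzt with rfl | h
    · exact absurd hzC hf.1
    · exact h

lemma Dcard_Icc (n z : ℕ) (C : List ℕ) (h1 : 1 ≤ z) :
    ((IlistAsc n C).filter (fun w => decide (z ≤ w))).length
      = ((Finset.Icc z n).filter (fun t => t ∈ C ∧ bar n t ∈ C)).card := by
  rw [Ilist_filter_len]
  congr 1
  ext t
  simp only [Finset.mem_filter, Finset.mem_range, Finset.mem_Icc]
  constructor
  · rintro ⟨htn, hzt, _, hd⟩; exact ⟨⟨hzt, by omega⟩, hd⟩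
  · rintro ⟨⟨hzt, htn⟩, hd⟩; exact ⟨by omega, hzt, by omega, hd⟩

lemma mem_Ilist (n z : ℕ) (C : List ℕ) :
    z ∈ IlistAsc n C ↔ 1 ≤ z ∧ z ≤ n ∧ z ∈ C ∧ bar n z ∈ C := by
  simp only [IlistAsc, List.mem_filter, List.mem_range, decide_eq_true_eq]
  constructor
  · rintro ⟨h1, h2, h3, h4⟩; exact ⟨h2, by omega, h3, h4⟩
  · rintro ⟨h1, h2, h3, h4⟩; exact ⟨by omega, h1, h3, h4⟩

lemma countP_eq_toFinset (n i : ℕ) (C : List ℕ) (hnodup : C.Nodup) :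
    C.countP (fun x => decide (i ≤ x ∧ x ≤ bar n i))
      = (C.toFinset.filter (fun x => i ≤ x ∧ x ≤ 2 * n + 1 - i)).card := by
  rw [List.countP_eq_length_filter,
    ← List.toFinset_card_of_nodup (List.Nodup.filter _ hnodup), List.toFinset_filter]
  congr 1
  apply Finset.filter_congr
  intro x _
  exact decide_eq_true_iff

lemma DF_toFinset (n z : ℕ) (C : List ℕ) :
    (((Finset.Icc z n).filter (fun t => t ∉ C.toFinset ∧ 2 * n + 1 - t ∉ C.toFinset)).card
      = ((Finset.Icc z n).filter (fun t => t ∉ C ∧ bar n t ∉ C)).card)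
    ∧ (((Finset.Icc z n).filter (fun t => t ∈ C.toFinset ∧ 2 * n + 1 - t ∈ C.toFinset)).card
      = ((Finset.Icc z n).filter (fun t => t ∈ C ∧ bar n t ∈ C)).card) := by
  constructor <;> · congr 1; apply Finset.filter_congr; intro x _; simp [bar]

end CoadmAux

/-- a column is coadmissible iff the set `H = {h₁ > ⋯ > h_r}` of the
coadmissibility criterion exists. -/
theorem coadmissible_iff_hasCoSplit (n : ℕ) (C : List ℕ) (hC : IsColumn n C) :
    CoAdm n C ↔ HasCoSplit n C := by
  obtain ⟨hch, hbound⟩ := hC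
  have hnodup : C.Nodup := ((List.isChain_iff_pairwise).mp hch).imp (fun h => ne_of_lt h)
  have hSb : ∀ x ∈ C.toFinset, 1 ≤ x ∧ x ≤ 2 * n := fun x hx => hbound x (List.mem_toFinset.mp hx)
  have key : ∀ z, 1 ≤ z → z ≤ n → z ∈ C → bar n z ∈ C →
      (C.countP (fun x => decide (z ≤ x ∧ x ≤ bar n z)) ≤ n - z + 1 ↔
        ((IlistAsc n C).filter (fun w => decide (z ≤ w))).length ≤ CoadmAux.fc n C z) := by
    intro z h1 h2 h3 h4
    have hk := CoadmAux.keyFinset n C.toFinset hSb z h1 h2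
    rw [(CoadmAux.DF_toFinset n z C).1, (CoadmAux.DF_toFinset n z C).2] at hk
    rw [CoadmAux.countP_eq_toFinset n z C hnodup,
      CoadmAux.fc_Icc n z C h1 h2 h3, CoadmAux.Dcard_Icc n z C h1]
    omega
  have hpwI : (IlistAsc n C).Pairwise (· < ·) :=
    List.Pairwise.filter _ (List.pairwise_lt_range)
  constructor
  · intro hco
    apply CoadmAux.coSplit_back n C _ hpwI 0
    intro z hz
    obtain ⟨h1, h2, h3, h4⟩ := (CoadmAux.mem_Ilist n z C).mp hz
    have hmax : max 0 z = z := by omega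
    rw [hmax]
    exact (key z h1 h2 h3 h4).mp (hco z h1 h2 h3 h4)
  · intro hsp z h1 h2 h3 h4
    obtain ⟨H, hH⟩ := Option.isSome_iff_exists.mp hsp
    have hz : z ∈ IlistAsc n C := (CoadmAux.mem_Ilist n z C).mpr ⟨h1, h2, h3, h4⟩
    exact (key z h1 h2 h3 h4).mpr (CoadmAux.coSplit_perz n C _ hpwI 0 H hH z hz)
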